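/- Define X_0 = 1, X_1 = 1 and, for n ≥ 2, X_n = 2(n−1)·X_{n−1} + Σ_{j=2}^{n−2} (j−1)·X_j·X_{n−j} (the sum being empty for n ≤ 3), and let X(t) = Σ_{n≥0} X_n t^n be the corresponding formal power series over ℚ. Then for every n ≥ 2, the coefficient of t^{n−1} in X(t)^n equals n·(2n−3)!!. -/

import Mathlib

/-- The sequence `X_n` counting equivalence classes of circular planar electrical networks:
`X_0 = 1`, `X_1 = 1` and, for `n ≥ 2`,
`X_n = 2(n-1) X_{n-1} + ∑_{j=2}^{n-2} (j-1) X_j X_{n-j}` (the sum being empty for `n ≤ 3`;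
here it is written over the attached index set to establish termination). -/
def X : ℕ → ℕ
  | 0 => 1
  | 1 => 1
  | n + 2 =>
      2 * (n + 1) * X (n + 1) +
        ∑ j ∈ (Finset.Icc 2 n).attach, (j.1 - 1) * X j.1 * X (n + 2 - j.1)
decreasing_by
  · exact Nat.lt_succ_self (n + 1)
  · have := j.2; rw [Finset.mem_Icc] at this; omega
  · have := j.2; rw [Finset.mem_Icc] at this; omega


open Finset
open scoped Nat

/-- The generating function of `X`. -/
noncomputable def Yser : PowerSeries ℚ := PowerSeries.mk fun i => (X i : ℚ)

lemma X_zero : X 0 = 1 := by rw [X]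
lemma X_one : X 1 = 1 := by rw [X]

/-- The recurrence in range form, over ℕ. -/
lemma X_rec (r : ℕ) :
    X (r + 2) = 2 * (r + 1) * X (r + 1)
      + ∑ i ∈ range r, i * X (i + 1) * X (r + 1 - i) := by
  rw [X]
  congr 1
  rw [Finset.sum_attach (Finset.Icc 2 r) (fun j => (j - 1) * X j * X (r + 2 - j))]
  rcases r with _ | s
  · simp
  · rw [Finset.sum_range_succ' (fun i => i * X (i + 1) * X (s + 1 + 1 - i)) s]
    simp only [zero_mul, add_zero, mul_zero]
    have hIcc : Finset.Icc 2 (s + 1) = Finset.Ico 2 (s + 2) := by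
      rw [← Finset.Ico_add_one_right_eq_Icc]; rfl
    rw [hIcc, Finset.sum_Ico_eq_sum_range]
    simp only [show s + 2 - 2 = s from rfl]
    apply Finset.sum_congr rfl
    intro i _
    have h1 : 2 + i - 1 = i + 1 := by omega
    have h2 : s + 1 + 2 - (2 + i) = s + 1 - i := by omega
    have h3 : s + 1 + 1 - (i + 1) = s + 1 - i := by omega
    rw [h1, h2, h3, show 2 + i = i + 1 + 1 from by omega]

lemma Xq_rec (r : ℕ) :
    (X (r + 2) : ℚ) = 2 * (r + 1) * (X (r + 1) : ℚ)
      + ∑ i ∈ range r, (i : ℚ) * (X (i + 1) : ℚ) * (X (r + 1 - i) : ℚ) := by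
  rw [X_rec r]
  push_cast
  ring

local notation "D" => PowerSeries.derivative ℚ
local notation "T" => (PowerSeries.X : PowerSeries ℚ)

lemma cY (k : ℕ) : PowerSeries.coeff (R := ℚ) k Yser = (X k : ℚ) := PowerSeries.coeff_mk _ _

lemma ode : T * (D Yser) + Yser ^ 2 =
    Yser + T * Yser + T * (T * (D Yser)) + T * ((D Yser) * Yser) := by
  ext m
  rcases m with _ | m
  · simp [sq, PowerSeries.coeff_mul, cY, X_zero, Yser, X_one]
  rcases m with _ | r
  · simp [sq, PowerSeries.coeff_mul, PowerSeries.coeff_succ_X_mul,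
      PowerSeries.coeff_derivative, cY, X_zero, X_one, Finset.Nat.antidiagonal_succ,
      Finset.sum_insert, Finset.sum_singleton, Prod.map]
    ring
  · -- main case m = r + 2
    have hq : ∀ k, PowerSeries.coeff (R := ℚ) k Yser = (X k : ℚ) := cY
    simp only [map_add]
    rw [PowerSeries.coeff_succ_X_mul, PowerSeries.coeff_succ_X_mul,
      PowerSeries.coeff_succ_X_mul, PowerSeries.coeff_succ_X_mul,
      PowerSeries.coeff_succ_X_mul, PowerSeries.coeff_derivative,
      PowerSeries.coeff_derivative, sq, PowerSeries.coeff_mul,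
      PowerSeries.coeff_mul, Finset.Nat.sum_antidiagonal_eq_sum_range_succ_mk,
      Finset.Nat.sum_antidiagonal_eq_sum_range_succ_mk]
    simp only [hq, PowerSeries.coeff_derivative, hq]
    -- now a scalar identity in ℚ
    have hA : ∑ i ∈ range (r + 2 + 1), (X i : ℚ) * (X (r + 2 - i) : ℚ)
        = (X (r + 2) : ℚ) + ∑ i ∈ range (r + 2), (X (i + 1) : ℚ) * (X (r + 1 - i) : ℚ) := by
      rw [Finset.sum_range_succ' (fun i => (X i : ℚ) * (X (r + 2 - i) : ℚ)) (r + 2)]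
      have e0 : ∀ i ∈ range (r + 2),
          (X (i + 1) : ℚ) * (X (r + 2 - (i + 1)) : ℚ)
            = (X (i + 1) : ℚ) * (X (r + 1 - i) : ℚ) := by
        intro i _
        have : r + 2 - (i + 1) = r + 1 - i := by omega
        rw [this]
      rw [Finset.sum_congr rfl e0, X_zero]
      push_cast
      ring
    have hB : ∑ i ∈ range (r + 2), (X (i + 1) : ℚ) * ((i : ℚ) + 1) * (X (r + 1 - i) : ℚ)
        = (∑ i ∈ range r, (i : ℚ) * (X (i + 1) : ℚ) * (X (r + 1 - i) : ℚ))
          + (∑ i ∈ range (r + 2), (X (i + 1) : ℚ) * (X (r + 1 - i) : ℚ))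
          + (r : ℚ) * (X (r + 1) : ℚ) + ((r : ℚ) + 1) * (X (r + 2) : ℚ) := by
      have e1 : ∀ i ∈ range (r + 2), (X (i + 1) : ℚ) * ((i : ℚ) + 1) * (X (r + 1 - i) : ℚ)
          = (i : ℚ) * (X (i + 1) : ℚ) * (X (r + 1 - i) : ℚ)
            + (X (i + 1) : ℚ) * (X (r + 1 - i) : ℚ) := by
        intro i _; ring
      have h1 : r + 1 - r = 1 := by omega
      have h2 : r + 1 - (r + 1) = 0 := by omega
      have hC : ∑ i ∈ range (r + 2), (i : ℚ) * (X (i + 1) : ℚ) * (X (r + 1 - i) : ℚ)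
          = (∑ i ∈ range r, (i : ℚ) * (X (i + 1) : ℚ) * (X (r + 1 - i) : ℚ))
            + (r : ℚ) * (X (r + 1) : ℚ) + ((r : ℚ) + 1) * (X (r + 2) : ℚ) := by
        rw [Finset.sum_range_succ, Finset.sum_range_succ, h1, h2, X_zero, X_one]
        push_cast
        ring
      rw [Finset.sum_congr rfl e1, Finset.sum_add_distrib, hC]
      ring
    push_cast at hA hB ⊢
    simp only [Nat.succ_eq_add_one, show r + 1 + 1 = r + 2 from rfl,
      show r + 1 + 1 + 1 = r + 2 + 1 from rfl] at hA hB ⊢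
    have hrec := Xq_rec r
    push_cast at hrec
    linear_combination hA - hB + hrec

lemma coeff_cast_mul (m n : ℕ) (f : PowerSeries ℚ) :
    PowerSeries.coeff (R := ℚ) n ((m : PowerSeries ℚ) * f) = (m : ℚ) * PowerSeries.coeff (R := ℚ) n f := by
  rw [← map_natCast (PowerSeries.C (R := ℚ)) m, PowerSeries.coeff_C_mul]

lemma hpow (j : ℕ) :
    D (Yser ^ (j + 1)) = ((j + 1 : ℕ) : PowerSeries ℚ) * Yser ^ j * D Yser := by
  rw [Derivation.leibniz_pow]
  simp only [Nat.add_sub_cancel, nsmul_eq_mul, smul_eq_mul]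
  ring

lemma G_k (k : ℕ) :
    ((k + 2 : ℕ) : PowerSeries ℚ) * (T * D (Yser ^ (k + 1)))
      + (((k + 1) * (k + 2) : ℕ) : PowerSeries ℚ) * Yser ^ (k + 2)
    = ((k + 2 : ℕ) : PowerSeries ℚ) * (T * (T * D (Yser ^ (k + 1))))
      + ((k + 1 : ℕ) : PowerSeries ℚ) * (T * D (Yser ^ (k + 2)))
      + (((k + 1) * (k + 2) : ℕ) : PowerSeries ℚ) * Yser ^ (k + 1)
      + (((k + 1) * (k + 2) : ℕ) : PowerSeries ℚ) * (T * Yser ^ (k + 1)) := by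
  rw [hpow k, hpow (k + 1)]
  push_cast
  linear_combination (((k : PowerSeries ℚ) + 1) * ((k : PowerSeries ℚ) + 2) * Yser ^ k) * ode

lemma diag (k : ℕ) :
    ((k : ℚ) + 1) * PowerSeries.coeff (R := ℚ) (k + 1) (Yser ^ (k + 2))
      = ((k : ℚ) + 2) * (2 * (k : ℚ) + 1) * PowerSeries.coeff (R := ℚ) k (Yser ^ (k + 1)) := by
  have G := congrArg (PowerSeries.coeff (R := ℚ) (k + 1)) (G_k k)
  simp only [map_add, coeff_cast_mul, PowerSeries.coeff_succ_X_mul,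
    PowerSeries.coeff_derivative] at G
  have c2 : PowerSeries.coeff (R := ℚ) k (T * D (Yser ^ (k + 1)))
      = (k : ℚ) * PowerSeries.coeff (R := ℚ) k (Yser ^ (k + 1)) := by
    rcases k with _ | j
    · simp
    · rw [PowerSeries.coeff_succ_X_mul, PowerSeries.coeff_derivative]
      push_cast
      ring
  rw [c2] at G
  push_cast at G ⊢
  linear_combination G

lemma doubleFac_step (k : ℕ) : (2 * k + 1)‼ = (2 * k + 1) * (2 * k - 1)‼ := by
  rcases k with _ | j
  · simp
  · rw [show 2 * (j + 1) + 1 = 2 * j + 1 + 2 from by omega,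
      show 2 * (j + 1) - 1 = 2 * j + 1 from by omega, Nat.doubleFactorial_add_two]

lemma main_diag (k : ℕ) :
    PowerSeries.coeff (R := ℚ) k (Yser ^ (k + 1)) = ((k + 1) * (2 * k - 1)‼ : ℕ) := by
  induction k with
  | zero => simp [Yser, X_zero]
  | succ j ih =>
    have hd := diag j
    rw [ih] at hd
    have hj : ((j : ℚ) + 1) ≠ 0 := by positivity
    have : PowerSeries.coeff (R := ℚ) (j + 1) (Yser ^ (j + 2))
        = ((j : ℚ) + 2) * (2 * (j : ℚ) + 1) * ((j + 1) * (2 * j - 1)‼ : ℕ) / ((j : ℚ) + 1) := by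
      field_simp at hd ⊢
      linarith [hd]
    rw [show j + 1 + 1 = j + 2 from rfl, this]
    rw [show (j + 1 + 1) * (2 * (j + 1) - 1)‼ = (j + 2) * ((2 * j + 1) * (2 * j - 1)‼) from by
      rw [show 2 * (j + 1) - 1 = 2 * j + 1 from by omega, ← doubleFac_step j]]
    push_cast
    field_simp

/-- For every `n ≥ 2`, the coefficient of `t^{n-1}` in `X(t)^n` equals `n·(2n-3)!!`,
where `X(t) = ∑_{n ≥ 0} X_n t^n` is the generating function of the sequence `X` over `ℚ`. -/
theorem coeff_pow_generating_function (n : ℕ) (hn : 2 ≤ n) :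
    PowerSeries.coeff (R := ℚ) (n - 1) ((PowerSeries.mk fun i => (X i : ℚ)) ^ n) =
      n * Nat.doubleFactorial (2 * n - 3) := by
  obtain ⟨k, rfl⟩ : ∃ k, n = k + 2 := ⟨n - 2, by omega⟩
  have h := main_diag (k + 1)
  rw [show k + 1 + 1 = k + 2 from rfl] at h
  show PowerSeries.coeff (R := ℚ) (k + 2 - 1) (Yser ^ (k + 2)) = _
  rw [show k + 2 - 1 = k + 1 from rfl, h]
  rw [show 2 * (k + 2) - 3 = 2 * (k + 1) - 1 from by omega]
  push_cast
  ring
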